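/- Let q be an odd prime power. If q ≡ 1 (mod 4), then the point ⟨(0,0,1)⟩ is H-covered. If q ≡ 3 (mod 4), then the point ⟨(0,0,1)⟩ is H-free. -/

import Mathlib

noncomputable section

/-- Three points of PG(2,q) are collinear if they have linearly dependent representatives. -/
def Coll3 {F : Type*} [Field F] (P Q R : Projectivization F (Fin 3 → F)) : Prop :=
  ¬ LinearIndependent F ![P.rep, Q.rep, R.rep]

/-- A point is `S`-covered if it lies on a line through two distinct points of `S`. -/
def PGCovered {F : Type*} [Field F] (S : Set (Projectivization F (Fin 3 → F)))
    (P : Projectivization F (Fin 3 → F)) : Prop :=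
  ∃ Q ∈ S, ∃ R ∈ S, Q ≠ R ∧ Coll3 P Q R

/-- A point not in `S` is `S`-free if it is not `S`-covered. -/
def PGFree {F : Type*} [Field F] (S : Set (Projectivization F (Fin 3 → F)))
    (P : Projectivization F (Fin 3 → F)) : Prop :=
  P ∉ S ∧ ¬ PGCovered S P

lemma vec_ne_zero {F : Type*} [Field F] (v : Fin 3 → F) (i : Fin 3) (h : v i ≠ 0) : v ≠ 0 :=
  fun hv => h (by simp [hv])

/-- The set `H = {⟨(1,s⁴,s²)⟩ : s ∈ F}` of points of PG(2,q). -/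
def HSet (F : Type*) [Field F] : Set (Projectivization F (Fin 3 → F)) :=
  {P | ∃ s : F, P = Projectivization.mk F ![1, s ^ 4, s ^ 2] (vec_ne_zero _ 0 (by simp))}

/-- The conic `C : XY = Z²` in PG(2,q).  (Membership does not depend on the choice of
representative since the equation is homogeneous.) -/
def conicC (F : Type*) [Field F] : Set (Projectivization F (Fin 3 → F)) :=
  {P | P.rep 0 * P.rep 1 = P.rep 2 ^ 2}

/-- An arc: a set of points no three of which are collinear. -/
def IsPGArc {F : Type*} [Field F] (S : Set (Projectivization F (Fin 3 → F))) : Prop :=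
  ∀ P ∈ S, ∀ Q ∈ S, ∀ R ∈ S, P ≠ Q → P ≠ R → Q ≠ R → ¬ Coll3 P Q R

/-- A complete arc: an arc which cannot be extended to a larger arc. -/
def IsCompletePGArc {F : Type*} [Field F] (S : Set (Projectivization F (Fin 3 → F))) : Prop :=
  IsPGArc S ∧ ∀ P ∉ S, ¬ IsPGArc (insert P S)

section Aux

variable {F : Type*} [Field F]

lemma li_aux (A a B b : F) (hAB : A ≠ B) :
    LinearIndependent F ![![0,0,1], ![1,A,a], ![1,B,b]] := by
  rw [Fintype.linearIndependent_iff]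
  intro g hg
  have h0 := congrFun hg 0
  have h1 := congrFun hg 1
  have h2 := congrFun hg 2
  simp [Fin.sum_univ_three, Matrix.vecHead, Matrix.vecTail] at h0 h1 h2
  have hg1 : g 1 = 0 := by
    have : g 1 * (A - B) = 0 := by linear_combination h1 - B * h0
    rcases mul_eq_zero.1 this with h | h
    · exact h
    · exact absurd (sub_eq_zero.1 h) hAB
  have hg2 : g 2 = 0 := by rw [hg1] at h0; simpa using h0
  have hg0 : g 0 = 0 := by
    have := h2; rw [hg1, hg2] at this; simpa using this
  intro i; fin_cases i <;> assumption

end Aux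

open Projectivization in
/-- if `q ≡ 1 (mod 4)` the point `⟨(0,0,1)⟩` is `H`-covered; if `q ≡ 3 (mod 4)`
it is `H`-free. -/
theorem stmt7 (F : Type*) [Field F] [Fintype F] (q : ℕ) (hcard : Fintype.card F = q)
    (hodd : Odd q) :
    (q % 4 = 1 →
      PGCovered (HSet F) (Projectivization.mk F ![0, 0, 1] (vec_ne_zero _ 2 (by simp)))) ∧
    (q % 4 = 3 →
      PGFree (HSet F) (Projectivization.mk F ![0, 0, 1] (vec_ne_zero _ 2 (by simp)))) := by
  constructor
  · -- q ≡ 1 (mod 4): covered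
    intro hq1
    have hs : IsSquare (-1 : F) :=
      FiniteField.isSquare_neg_one_iff.2 (by rw [hcard, hq1]; omega)
    obtain ⟨r, hr⟩ := hs
    have hr2 : r ^ 2 = -1 := by rw [sq]; exact hr.symm
    have hr4 : r ^ 4 = 1 := by
      have : r ^ 4 = (r ^ 2) ^ 2 := by ring
      rw [this, hr2]; ring
    have h2ne : (1 : F) ≠ -1 := by
      intro h
      have h2 : (2 : F) = 0 := by linear_combination h
      have hchar : ringChar F = 2 := by
        have hdvd : ringChar F ∣ 2 := (ringChar.spec F 2).1 (by exact_mod_cast h2)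
        rcases (Nat.dvd_prime Nat.prime_two).1 hdvd with h1 | h1
        · exact absurd h1 (CharP.ringChar_ne_one)
        · exact h1
      have := FiniteField.even_card_iff_char_two.1 hchar
      rw [hcard] at this
      omega
    refine ⟨Projectivization.mk F ![1, r ^ 4, r ^ 2] (vec_ne_zero _ 0 (by simp)), ⟨r, rfl⟩,
      Projectivization.mk F ![1, (1:F) ^ 4, (1:F) ^ 2] (vec_ne_zero _ 0 (by simp)), ⟨1, rfl⟩,
      ?_, ?_⟩
    · -- distinct points
      rw [Ne, Projectivization.mk_eq_mk_iff]
      rintro ⟨u, hu⟩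
      have h0 := congrFun hu 0
      have h2 := congrFun hu 2
      simp [Units.smul_def, hr2] at h0 h2
      rw [h0] at h2
      exact h2ne (by simpa using congrArg Units.val h2)
    · -- collinear
      intro hLI
      obtain ⟨a, ha⟩ := exists_smul_eq_mk_rep F ![(0:F), 0, 1] (vec_ne_zero _ 2 (by simp))
      obtain ⟨b, hb⟩ := exists_smul_eq_mk_rep F ![(1:F), r ^ 4, r ^ 2] (vec_ne_zero _ 0 (by simp))
      obtain ⟨c, hc⟩ := exists_smul_eq_mk_rep F ![(1:F), (1:F) ^ 4, (1:F) ^ 2]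
        (vec_ne_zero _ 0 (by simp))
      rw [Fintype.linearIndependent_iff] at hLI
      have key := hLI ![2 * (a:F)⁻¹, (b:F)⁻¹, -(c:F)⁻¹] ?_ 1
      · exact inv_ne_zero b.ne_zero (by simpa using key)
      · rw [Fin.sum_univ_three]
        simp only [Matrix.cons_val_zero, Matrix.cons_val_one, Matrix.cons_val_two,
          Matrix.head_cons, Matrix.tail_cons]
        rw [← ha, ← hb, ← hc]
        funext j
        fin_cases j
        all_goals simp only [Fin.zero_eta, Fin.mk_one, Fin.reduceFinMk]
        all_goals simp only [Pi.add_apply, Pi.smul_apply, Pi.zero_apply, Units.smul_def,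
          smul_eq_mul, Matrix.cons_val_zero, Matrix.cons_val_one, Matrix.cons_val_two,
          Matrix.head_cons, Matrix.tail_cons, Matrix.cons_val_fin_one]
        all_goals field_simp
        · linear_combination
        · linear_combination hr4
        · linear_combination hr2

  · -- q ≡ 3 (mod 4): free
    intro hq3
    have hnsq : ¬ IsSquare (-1 : F) := by
      rw [FiniteField.isSquare_neg_one_iff, hcard, hq3]; simp
    constructor
    · rintro ⟨s, hs⟩
      rw [Projectivization.mk_eq_mk_iff] at hs
      obtain ⟨u, hu⟩ := hs
      have h0 := congrFun hu 0
      simp [Units.smul_def] at h0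
    · rintro ⟨Q, ⟨s, rfl⟩, R, ⟨t, rfl⟩, hQR, hColl⟩
      apply hColl
      have hst2 : s ^ 2 ≠ t ^ 2 := by
        intro h
        apply hQR
        rw [Projectivization.mk_eq_mk_iff]
        refine ⟨1, ?_⟩
        have h4 : s ^ 4 = t ^ 4 := by
          have : s ^ 4 = (s ^ 2) ^ 2 := by ring
          rw [this, h]; ring
        rw [h4, h]; simp
      have hst4 : s ^ 4 ≠ t ^ 4 := by
        intro h
        have hfac : (s ^ 2 - t ^ 2) * (s ^ 2 + t ^ 2) = 0 := by linear_combination h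
        rcases mul_eq_zero.1 hfac with h' | h'
        · exact hst2 (sub_eq_zero.1 h')
        · have ht : t ≠ 0 := by
            rintro rfl
            apply hst2
            have : s ^ 2 = 0 := by linear_combination h'
            simp [this]
          apply hnsq
          refine ⟨s * t⁻¹, ?_⟩
          have : (s * t⁻¹) * (s * t⁻¹) = s ^ 2 / t ^ 2 := by field_simp
          rw [this]
          field_simp
          linear_combination -h'
      obtain ⟨a, ha⟩ := exists_smul_eq_mk_rep F ![(0:F), 0, 1] (vec_ne_zero _ 2 (by simp))
      obtain ⟨b, hb⟩ := exists_smul_eq_mk_rep F ![(1:F), s ^ 4, s ^ 2] (vec_ne_zero _ 0 (by simp))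
      obtain ⟨c, hc⟩ := exists_smul_eq_mk_rep F ![(1:F), t ^ 4, t ^ 2] (vec_ne_zero _ 0 (by simp))
      have base := li_aux (s ^ 4) (s ^ 2) (t ^ 4) (t ^ 2) hst4
      have hli := base.units_smul ![a, b, c]
      have heq : (![(Projectivization.mk F ![0, 0, 1] (vec_ne_zero _ 2 (by simp))).rep,
          (Projectivization.mk F ![1, s ^ 4, s ^ 2] (vec_ne_zero _ 0 (by simp))).rep,
          (Projectivization.mk F ![1, t ^ 4, t ^ 2] (vec_ne_zero _ 0 (by simp))).rep]
          : Fin 3 → Fin 3 → F)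
          = ![a, b, c] • ![![0,0,1], ![1, s ^ 4, s ^ 2], ![1, t ^ 4, t ^ 2]] := by
        funext i
        fin_cases i <;> simp [Pi.smul_apply', ← ha, ← hb, ← hc]
      rw [heq]
      exact hli
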